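/- For natural numbers n and r with 1 ≤ r ≤ n−1, the second largest eigenvalue (listed with multiplicity) of the adjacency matrix of the Johnson graph J(n,r) equals r(n−r) − n. Consequently, for the normalized transition matrix M = A/(r(n−r)) of the simple random walk on J(n,r), the difference between the top eigenvalue 1 and the second largest eigenvalue equals n/(r(n−r)). -/

import Mathlib

open SimpleGraph Polynomial Finset Matrix

/-- The Johnson graph `J(n,r)`: vertices are the `r`-element subsets of a fixed `n`-element
set, two subsets `S`, `S'` being adjacent iff `|S ∩ S'| = r - 1` (in particular `S ≠ S'`). -/
def johnsonGraph (n r : ℕ) : SimpleGraph {s : Finset (Fin n) // s.card = r} where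
  Adj S T := S ≠ T ∧ ((S : Finset (Fin n)) ∩ (T : Finset (Fin n))).card = r - 1
  symm := ⟨fun S T h => ⟨h.1.symm, by rw [Finset.inter_comm]; exact h.2⟩⟩
  loopless := ⟨fun S h => h.1 rfl⟩

instance johnsonGraphAdjDecidable (n r : ℕ) : DecidableRel (johnsonGraph n r).Adj :=
  fun S T => inferInstanceAs
    (Decidable (S ≠ T ∧ ((S : Finset (Fin n)) ∩ (T : Finset (Fin n))).card = r - 1))

abbrev JV (n k : ℕ) := {s : Finset (Fin n) // s.card = k}

lemma subset_count {n : ℕ} (k : ℕ) (U : Finset (Fin n)) :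
    ∑ T : JV n k, (if (T : Finset (Fin n)) ⊆ U then (1:ℝ) else 0) = (U.card.choose k : ℝ) := by
  rw [Finset.sum_boole]
  norm_num
  rw [← Finset.card_powersetCard]
  apply Finset.card_bij (fun (T : JV n k) _ => (T : Finset (Fin n)))
  · intro a ha
    simp only [Finset.mem_filter, Finset.mem_univ, true_and] at ha
    simp [Finset.mem_powersetCard, ha, a.2]
  · intro a _ b _ h; exact Subtype.ext h
  · intro b hb
    rw [Finset.mem_powersetCard] at hb
    exact ⟨⟨b, hb.2⟩, by simp [hb.1], rfl⟩

lemma superset_count {n : ℕ} (m : ℕ) (U : Finset (Fin n)) (hU : U.card ≤ m) :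
    ∑ S : JV n m, (if U ⊆ (S : Finset (Fin n)) then (1:ℝ) else 0)
      = (((n - U.card).choose (m - U.card) : ℕ) : ℝ) := by
  rw [Finset.sum_boole]
  norm_num
  have hcompl : Uᶜ.card = n - U.card := by
    rw [Finset.card_compl, Fintype.card_fin]
  rw [← hcompl, ← Finset.card_powersetCard]
  apply Finset.card_bij (fun (S : JV n m) _ => (S : Finset (Fin n)) \ U)
  · intro a ha
    simp only [Finset.mem_filter, Finset.mem_univ, true_and] at ha
    rw [Finset.mem_powersetCard]
    constructor
    · intro x hx; simp only [Finset.mem_sdiff] at hx; simp [hx.2]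
    · rw [Finset.card_sdiff_of_subset ha, a.2]
  · intro a ha b hb h
    simp only [Finset.mem_filter, Finset.mem_univ, true_and] at ha hb
    apply Subtype.ext
    rw [← Finset.sdiff_union_of_subset ha, ← Finset.sdiff_union_of_subset hb, h]
  · intro b hb
    rw [Finset.mem_powersetCard] at hb
    have hdisj : Disjoint b U := by
      rw [Finset.disjoint_left]; intro x hx; have := hb.1 hx; simp at this; exact this
    have hcard : (b ∪ U).card = m := by
      rw [Finset.card_union_of_disjoint hdisj, hb.2]
      omega
    refine ⟨⟨b ∪ U, hcard⟩, by simp, ?_⟩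
    simp only
    rw [Finset.union_sdiff_cancel_right hdisj]

/-- sum over `(k+1)`-sets containing `T`, of `x`. -/
def dnF (n k : ℕ) (x : JV n (k+1) → ℝ) : JV n k → ℝ :=
  fun T => ∑ S : JV n (k+1), if (T : Finset (Fin n)) ⊆ (S : Finset (Fin n)) then x S else 0

/-- sum over `k`-subsets of `S`, of `y`. -/
def upF (n k : ℕ) (y : JV n k → ℝ) : JV n (k+1) → ℝ :=
  fun S => ∑ T : JV n k, if (T : Finset (Fin n)) ⊆ (S : Finset (Fin n)) then y T else 0

lemma adj_mulVec {n r : ℕ} (x : JV n r → ℝ) (S : JV n r) :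
    ((johnsonGraph n r).adjMatrix ℝ *ᵥ x) S
      = ∑ T : JV n r, if (johnsonGraph n r).Adj S T then x T else 0 := by
  rw [SimpleGraph.adjMatrix_mulVec_apply, SimpleGraph.neighborFinset_eq_filter, Finset.sum_filter]

lemma upF_dnF_core {n k : ℕ} (x : JV n (k+1) → ℝ) (S : JV n (k+1)) :
    upF n k (dnF n k x) S
      = ∑ S' : JV n (k+1), (((((S:Finset (Fin n)) ∩ (S':Finset (Fin n))).card.choose k : ℕ)) : ℝ) * x S' := by
  unfold upF dnF
  have key : ∀ T : JV n k,
      (if (T:Finset (Fin n)) ⊆ (S:Finset (Fin n)) then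
        (∑ S' : JV n (k+1), if (T:Finset (Fin n)) ⊆ (S':Finset (Fin n)) then x S' else 0) else 0)
      = ∑ S' : JV n (k+1),
          (if (T:Finset (Fin n)) ⊆ (S:Finset (Fin n)) ∩ (S':Finset (Fin n)) then (1:ℝ) else 0) * x S' := by
    intro T
    by_cases h : (T:Finset (Fin n)) ⊆ (S:Finset (Fin n))
    · rw [if_pos h]
      refine Finset.sum_congr rfl fun S' _ => ?_
      by_cases h2 : (T:Finset (Fin n)) ⊆ (S':Finset (Fin n))
      · rw [if_pos h2, if_pos (Finset.subset_inter h h2), one_mul]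
      · rw [if_neg h2, if_neg (fun hc => h2 (hc.trans Finset.inter_subset_right)), zero_mul]
    · rw [if_neg h]
      symm
      refine Finset.sum_eq_zero fun S' _ => ?_
      rw [if_neg (fun hc => h (hc.trans Finset.inter_subset_left)), zero_mul]
  rw [Finset.sum_congr rfl fun T _ => key T, Finset.sum_comm]
  refine Finset.sum_congr rfl fun S' _ => ?_
  rw [← Finset.sum_mul, subset_count]

lemma dnF_upF_core {n k : ℕ} (y : JV n k → ℝ) (T : JV n k) :
    dnF n k (upF n k y) T
      = ∑ T' : JV n k,
          (∑ S : JV n (k+1), if ((T:Finset (Fin n)) ∪ (T':Finset (Fin n))) ⊆ (S:Finset (Fin n)) then (1:ℝ) else 0) * y T' := by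
  unfold upF dnF
  have key : ∀ S : JV n (k+1),
      (if (T:Finset (Fin n)) ⊆ (S:Finset (Fin n)) then
        (∑ T' : JV n k, if (T':Finset (Fin n)) ⊆ (S:Finset (Fin n)) then y T' else 0) else 0)
      = ∑ T' : JV n k,
          (if ((T:Finset (Fin n)) ∪ (T':Finset (Fin n))) ⊆ (S:Finset (Fin n)) then (1:ℝ) else 0) * y T' := by
    intro S
    by_cases h : (T:Finset (Fin n)) ⊆ (S:Finset (Fin n))
    · rw [if_pos h]
      refine Finset.sum_congr rfl fun T' _ => ?_
      by_cases h2 : (T':Finset (Fin n)) ⊆ (S:Finset (Fin n))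
      · rw [if_pos h2, if_pos (Finset.union_subset h h2), one_mul]
      · rw [if_neg h2, if_neg (fun hc => h2 ((Finset.subset_union_right).trans hc)), zero_mul]
    · rw [if_neg h]
      symm
      refine Finset.sum_eq_zero fun T' _ => ?_
      rw [if_neg (fun hc => h ((Finset.subset_union_left).trans hc)), zero_mul]
  rw [Finset.sum_congr rfl fun S _ => key S, Finset.sum_comm]
  refine Finset.sum_congr rfl fun T' _ => ?_
  rw [← Finset.sum_mul]

lemma L1 {n k : ℕ} (x : JV n (k+1) → ℝ) (S : JV n (k+1)) :
    upF n k (dnF n k x) S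
      = ((johnsonGraph n (k+1)).adjMatrix ℝ *ᵥ x) S + ((k:ℝ)+1) * x S := by
  rw [upF_dnF_core, adj_mulVec]
  have split : ∀ S' : JV n (k+1),
      (((((S:Finset (Fin n)) ∩ (S':Finset (Fin n))).card.choose k : ℕ)) : ℝ) * x S'
      = (if (johnsonGraph n (k+1)).Adj S S' then x S' else 0)
        + (if S' = S then ((k:ℝ)+1) * x S' else 0) := by
    intro S'
    by_cases he : S' = S
    · subst he
      rw [Finset.inter_self, S'.2, Nat.choose_succ_self_right, if_neg (johnsonGraph n (k+1)).irrefl, if_pos rfl]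
      push_cast
      ring
    · rw [if_neg he, add_zero]
      have hsub : ((S:Finset (Fin n)) ∩ (S':Finset (Fin n))).card ≤ k := by
        by_contra hcon
        push_neg at hcon
        have h1 : ((S:Finset (Fin n)) ∩ (S':Finset (Fin n))).card ≤ k + 1 := by
          calc ((S:Finset (Fin n)) ∩ (S':Finset (Fin n))).card
              ≤ (S:Finset (Fin n)).card := Finset.card_le_card Finset.inter_subset_left
            _ = k + 1 := S.2
        have h2 : (S:Finset (Fin n)) ∩ (S':Finset (Fin n)) = (S:Finset (Fin n)) :=
          Finset.eq_of_subset_of_card_le Finset.inter_subset_left (by rw [S.2]; omega)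
        have h3 : (S:Finset (Fin n)) ⊆ (S':Finset (Fin n)) := by
          rw [← h2]; exact Finset.inter_subset_right
        have h4 : (S:Finset (Fin n)) = (S':Finset (Fin n)) :=
          Finset.eq_of_subset_of_card_le h3 (by rw [S.2, S'.2])
        exact he (Subtype.ext h4.symm)
      by_cases hc : ((S:Finset (Fin n)) ∩ (S':Finset (Fin n))).card = k
      · have hadj : (johnsonGraph n (k+1)).Adj S S' := ⟨fun h => he h.symm, by simpa using hc⟩
        rw [if_pos hadj, hc, Nat.choose_self]
        norm_num
      · have hadj : ¬ (johnsonGraph n (k+1)).Adj S S' := by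
          intro h
          exact hc (by simpa using h.2)
        rw [if_neg hadj, Nat.choose_eq_zero_of_lt (lt_of_le_of_ne hsub hc)]
        norm_num
  rw [Finset.sum_congr rfl fun S' _ => split S', Finset.sum_add_distrib]
  congr 1
  rw [Finset.sum_ite_eq' Finset.univ S (fun S' => ((k:ℝ)+1) * x S')]
  simp

lemma L2 {n k : ℕ} (y : JV n k → ℝ) (T : JV n k) :
    dnF n k (upF n k y) T
      = ((johnsonGraph n k).adjMatrix ℝ *ᵥ y) T + ((n:ℝ) - k) * y T := by
  have hkn : k ≤ n := by
    have h1 : (T:Finset (Fin n)).card ≤ n := by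
      simpa using Finset.card_le_univ (T:Finset (Fin n))
    rw [T.2] at h1; exact h1
  rw [dnF_upF_core, adj_mulVec]
  have split : ∀ T' : JV n k,
      (∑ S : JV n (k+1), if ((T:Finset (Fin n)) ∪ (T':Finset (Fin n))) ⊆ (S:Finset (Fin n)) then (1:ℝ) else 0) * y T'
      = (if (johnsonGraph n k).Adj T T' then y T' else 0)
        + (if T' = T then ((n:ℝ) - k) * y T' else 0) := by
    intro T'
    by_cases he : T' = T
    · subst he
      rw [Finset.union_self, superset_count (k+1) _ (by rw [T'.2]; omega), T'.2]
      rw [if_neg (johnsonGraph n k).irrefl, if_pos rfl, zero_add]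
      have h1 : k + 1 - k = 1 := by omega
      rw [h1, Nat.choose_one_right, Nat.cast_sub hkn]
    · have hunion : k + 1 ≤ ((T:Finset (Fin n)) ∪ (T':Finset (Fin n))).card := by
        have h0 : (T:Finset (Fin n)).card ≤ ((T:Finset (Fin n)) ∪ (T':Finset (Fin n))).card :=
          Finset.card_le_card Finset.subset_union_left
      -- if card = k then union = T hence T' ⊆ T hence T' = T
        rcases Nat.lt_or_ge (((T:Finset (Fin n)) ∪ (T':Finset (Fin n))).card) (k+1) with h | h
        · exfalso
          have h2 : (T:Finset (Fin n)) ∪ (T':Finset (Fin n)) = (T:Finset (Fin n)) :=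
            (Finset.eq_of_subset_of_card_le Finset.subset_union_left (by omega)).symm
          have h3 : (T':Finset (Fin n)) ⊆ (T:Finset (Fin n)) := by
            rw [← h2]; exact Finset.subset_union_right
          exact he (Subtype.ext (Finset.eq_of_subset_of_card_le h3 (by rw [T.2, T'.2])))
        · exact h
      have hsum : ((T:Finset (Fin n)) ∪ (T':Finset (Fin n))).card
          + ((T:Finset (Fin n)) ∩ (T':Finset (Fin n))).card = k + k := by
        rw [Finset.card_union_add_card_inter, T.2, T'.2]
      rw [if_neg he, add_zero]
      by_cases hu : ((T:Finset (Fin n)) ∪ (T':Finset (Fin n))).card = k + 1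
      · have hadj : (johnsonGraph n k).Adj T T' := ⟨fun h => he h.symm, by omega⟩
        rw [if_pos hadj, superset_count (k+1) _ (by omega), hu]
        norm_num
      · have hadj : ¬ (johnsonGraph n k).Adj T T' := by
          intro h
          have := h.2
          omega
        rw [if_neg hadj]
        have hz : (∑ S : JV n (k+1), if ((T:Finset (Fin n)) ∪ (T':Finset (Fin n))) ⊆ (S:Finset (Fin n)) then (1:ℝ) else 0) = 0 := by
          refine Finset.sum_eq_zero fun S _ => ?_
          rw [if_neg]
          intro hc
          have := Finset.card_le_card hc
          rw [S.2] at this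
          omega
        rw [hz, zero_mul]
  rw [Finset.sum_congr rfl fun T' _ => split T', Finset.sum_add_distrib]
  congr 1
  rw [Finset.sum_ite_eq' Finset.univ T (fun T' => ((n:ℝ) - k) * y T')]
  simp

/-- indicator of `a ∈ S` -/
def eV (n m : ℕ) (a : Fin n) : JV n m → ℝ := fun S => if a ∈ (S:Finset (Fin n)) then 1 else 0

lemma upF_const {n k : ℕ} (c : ℝ) (S : JV n (k+1)) :
    upF n k (fun _ => c) S = ((k:ℝ)+1) * c := by
  unfold upF
  have : ∀ T : JV n k, (if (T:Finset (Fin n)) ⊆ (S:Finset (Fin n)) then c else 0)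
      = (if (T:Finset (Fin n)) ⊆ (S:Finset (Fin n)) then (1:ℝ) else 0) * c := by
    intro T; by_cases h : (T:Finset (Fin n)) ⊆ (S:Finset (Fin n)) <;> simp [h]
  rw [Finset.sum_congr rfl fun T _ => this T, ← Finset.sum_mul, subset_count, S.2,
    Nat.choose_succ_self_right]
  push_cast; ring

lemma dnF_e {n k : ℕ} (hkn : k + 1 ≤ n) (a : Fin n) (T : JV n k) :
    dnF n k (eV n (k+1) a) T = if a ∈ (T:Finset (Fin n)) then ((n:ℝ) - (k+1)) * 1 + 1 else 1 := by
  unfold dnF eV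
  by_cases ha : a ∈ (T:Finset (Fin n))
  · rw [if_pos ha]
    have : ∀ S : JV n (k+1), (if (T:Finset (Fin n)) ⊆ (S:Finset (Fin n)) then (if a ∈ (S:Finset (Fin n)) then (1:ℝ) else 0) else 0)
        = (if (T:Finset (Fin n)) ⊆ (S:Finset (Fin n)) then (1:ℝ) else 0) := by
      intro S
      by_cases h : (T:Finset (Fin n)) ⊆ (S:Finset (Fin n))
      · rw [if_pos h, if_pos h, if_pos (h ha)]
      · rw [if_neg h, if_neg h]
    rw [Finset.sum_congr rfl fun S _ => this S, superset_count (k+1) _ (by rw [T.2]; omega), T.2]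
    have h1 : k + 1 - k = 1 := by omega
    rw [h1, Nat.choose_one_right, Nat.cast_sub (show k ≤ n by omega)]
    ring
  · rw [if_neg ha]
    have : ∀ S : JV n (k+1), (if (T:Finset (Fin n)) ⊆ (S:Finset (Fin n)) then (if a ∈ (S:Finset (Fin n)) then (1:ℝ) else 0) else 0)
        = (if insert a (T:Finset (Fin n)) ⊆ (S:Finset (Fin n)) then (1:ℝ) else 0) := by
      intro S
      by_cases h : insert a (T:Finset (Fin n)) ⊆ (S:Finset (Fin n))
      · rw [Finset.insert_subset_iff] at h
        rw [if_pos h.2, if_pos h.1, if_pos (Finset.insert_subset_iff.mpr h)]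
      · rw [if_neg h]
        by_cases hTS : (T:Finset (Fin n)) ⊆ (S:Finset (Fin n))
        · have haS : a ∉ (S:Finset (Fin n)) := by
            intro haS
            exact h (Finset.insert_subset_iff.mpr ⟨haS, hTS⟩)
          rw [if_pos hTS, if_neg haS]
        · rw [if_neg hTS]
    have hins : (insert a (T:Finset (Fin n))).card = k + 1 := by
      rw [Finset.card_insert_of_notMem ha, T.2]
    rw [Finset.sum_congr rfl fun S _ => this S, superset_count (k+1) _ (by rw [hins]), hins]
    simp

lemma upF_e {n k : ℕ} (a : Fin n) (S : JV n (k+1)) :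
    upF n k (eV n k a) S = (k:ℝ) * eV n (k+1) a S := by
  unfold upF eV
  by_cases haS : a ∈ (S:Finset (Fin n))
  · rw [if_pos haS]
    have key : ∀ T : JV n k, (if (T:Finset (Fin n)) ⊆ (S:Finset (Fin n)) then (if a ∈ (T:Finset (Fin n)) then (1:ℝ) else 0) else 0)
        = (if (T:Finset (Fin n)) ⊆ (S:Finset (Fin n)) then (1:ℝ) else 0)
          - (if (T:Finset (Fin n)) ⊆ ((S:Finset (Fin n)).erase a) then (1:ℝ) else 0) := by
      intro T
      by_cases h : (T:Finset (Fin n)) ⊆ (S:Finset (Fin n))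
      · rw [if_pos h, if_pos h]
        by_cases ha : a ∈ (T:Finset (Fin n))
        · rw [if_pos ha, if_neg]
          · ring
          · intro hc
            exact (Finset.notMem_erase a _) (hc ha)
        · rw [if_neg ha, if_pos (Finset.subset_erase.mpr ⟨h, ha⟩)]
          ring
      · rw [if_neg h, if_neg h, if_neg (fun hc => h (hc.trans (Finset.erase_subset _ _)))]
        ring
    rw [Finset.sum_congr rfl fun T _ => key T, Finset.sum_sub_distrib, subset_count, subset_count,
      S.2, Finset.card_erase_of_mem haS, S.2]
    have h1 : k + 1 - 1 = k := by omega
    rw [h1, Nat.choose_succ_self_right, Nat.choose_self]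
    push_cast; ring
  · rw [if_neg haS]
    have key : ∀ T : JV n k, (if (T:Finset (Fin n)) ⊆ (S:Finset (Fin n)) then (if a ∈ (T:Finset (Fin n)) then (1:ℝ) else 0) else 0) = 0 := by
      intro T
      by_cases h : (T:Finset (Fin n)) ⊆ (S:Finset (Fin n))
      · rw [if_pos h, if_neg (fun ha => haS (h ha))]
      · rw [if_neg h]
    rw [Finset.sum_congr rfl fun T _ => key T, Finset.sum_const_zero]
    ring

lemma dnF_const {n k : ℕ} (hkn : k + 1 ≤ n) (c : ℝ) (T : JV n k) :
    dnF n k (fun _ => c) T = ((n:ℝ) - k) * c := by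
  unfold dnF
  have : ∀ S : JV n (k+1), (if (T:Finset (Fin n)) ⊆ (S:Finset (Fin n)) then c else 0)
      = (if (T:Finset (Fin n)) ⊆ (S:Finset (Fin n)) then (1:ℝ) else 0) * c := by
    intro S; by_cases h : (T:Finset (Fin n)) ⊆ (S:Finset (Fin n)) <;> simp [h]
  rw [Finset.sum_congr rfl fun S _ => this S, ← Finset.sum_mul,
    superset_count (k+1) _ (by rw [T.2]; omega), T.2]
  have h1 : k + 1 - k = 1 := by omega
  rw [h1, Nat.choose_one_right, Nat.cast_sub (show k ≤ n by omega)]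

/-- regularity: the all-ones vector is an eigenvector with eigenvalue (k+1)(n-k-1) -/
lemma johnson_regular {n k : ℕ} (hkn : k + 1 ≤ n) :
    (johnsonGraph n (k+1)).adjMatrix ℝ *ᵥ (fun _ => (1:ℝ))
      = (((k:ℝ)+1) * ((n:ℝ) - (k+1))) • (fun _ => (1:ℝ)) := by
  funext S
  have h1 := L1 (fun _ => (1:ℝ)) S
  have h2 : dnF n k (fun _ => (1:ℝ)) = fun _ => ((n:ℝ) - k) * 1 := by
    funext T; exact dnF_const hkn 1 T
  rw [h2, upF_const] at h1
  have : ((johnsonGraph n (k+1)).adjMatrix ℝ *ᵥ fun _ => (1:ℝ)) S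
      = ((k:ℝ)+1) * (((n:ℝ) - k) * 1) - ((k:ℝ)+1) * 1 := by linarith
  rw [this]
  simp only [Pi.smul_apply, smul_eq_mul]
  push_cast; ring

/-- the second eigenvector -/
lemma johnson_second {n k : ℕ} (hkn : k + 1 ≤ n) (a b : Fin n) :
    (johnsonGraph n (k+1)).adjMatrix ℝ *ᵥ (fun S => eV n (k+1) a S - eV n (k+1) b S)
      = (((k:ℝ)+1) * ((n:ℝ) - (k+1)) - n) • (fun S => eV n (k+1) a S - eV n (k+1) b S) := by
  funext S
  set v : JV n (k+1) → ℝ := fun S => eV n (k+1) a S - eV n (k+1) b S with hv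
  have h1 := L1 v S
  have h2 : dnF n k v = fun T => ((n:ℝ) - (k+1)) * (eV n k a T - eV n k b T) := by
    funext T
    have hsub : dnF n k v T = dnF n k (eV n (k+1) a) T - dnF n k (eV n (k+1) b) T := by
      unfold dnF
      rw [← Finset.sum_sub_distrib]
      refine Finset.sum_congr rfl fun S' _ => ?_
      by_cases h : (T:Finset (Fin n)) ⊆ (S':Finset (Fin n)) <;> simp [h, hv]
    rw [hsub, dnF_e hkn a T, dnF_e hkn b T]
    unfold eV
    by_cases ha : a ∈ (T:Finset (Fin n)) <;> by_cases hb : b ∈ (T:Finset (Fin n)) <;>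
      simp [ha, hb] <;> ring
  have h3 : upF n k (fun T => ((n:ℝ) - (k+1)) * (eV n k a T - eV n k b T)) S
      = ((n:ℝ) - (k+1)) * ((k:ℝ) * eV n (k+1) a S - (k:ℝ) * eV n (k+1) b S) := by
    have hsplit : upF n k (fun T => ((n:ℝ) - (k+1)) * (eV n k a T - eV n k b T)) S
        = ((n:ℝ) - (k+1)) * (upF n k (eV n k a) S - upF n k (eV n k b) S) := by
      unfold upF
      rw [← Finset.sum_sub_distrib, Finset.mul_sum]
      refine Finset.sum_congr rfl fun T _ => ?_
      by_cases h : (T:Finset (Fin n)) ⊆ (S:Finset (Fin n)) <;> simp [h] <;> ring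
    rw [hsplit, upF_e, upF_e]
  rw [h2, h3] at h1
  have : ((johnsonGraph n (k+1)).adjMatrix ℝ *ᵥ v) S
      = ((n:ℝ) - (k+1)) * ((k:ℝ) * eV n (k+1) a S - (k:ℝ) * eV n (k+1) b S) - ((k:ℝ)+1) * v S := by
    linarith
  rw [this]
  simp only [Pi.smul_apply, smul_eq_mul, hv]
  push_cast; ring

lemma johnson_bound (n : ℕ) : ∀ (k : ℕ) (μ : ℝ) (x : JV n k → ℝ), x ≠ 0 →
    (johnsonGraph n k).adjMatrix ℝ *ᵥ x = μ • x →
    ((μ = (k:ℝ) * ((n:ℝ) - k) → ∃ c : ℝ, x = fun _ => c) ∧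
     (μ ≠ (k:ℝ) * ((n:ℝ) - k) → μ ≤ (k:ℝ) * ((n:ℝ) - k) - n)) := by
  intro k
  induction k with
  | zero =>
    intro μ x hx hAx
    obtain ⟨v, hv⟩ := Function.ne_iff.mp hx
    have hall : ∀ u : JV n 0, u = v := by
      intro u
      apply Subtype.ext
      rw [Finset.card_eq_zero.mp u.2, Finset.card_eq_zero.mp v.2]
    have h0 : ((johnsonGraph n 0).adjMatrix ℝ *ᵥ x) v = 0 := by
      rw [adj_mulVec]
      refine Finset.sum_eq_zero fun T _ => ?_
      rw [if_neg]
      intro h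
      exact h.1 (hall T).symm
    have hμ : μ * x v = 0 := by
      have := congrFun hAx v
      rw [h0] at this
      simpa [Pi.smul_apply, smul_eq_mul] using this.symm
    have hμ0 : μ = 0 := by
      rcases mul_eq_zero.mp hμ with h | h
      · exact h
      · exact absurd h hv
    constructor
    · intro _
      exact ⟨x v, funext fun u => by rw [hall u]⟩
    · intro hne
      exfalso
      apply hne
      rw [hμ0]
      norm_num
  | succ k ih =>
    intro μ x hx hAx
    obtain ⟨S₀, hS₀⟩ := Function.ne_iff.mp hx
    have hkn : k + 1 ≤ n := by
      have h1 : (S₀:Finset (Fin n)).card ≤ n := by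
        simpa using Finset.card_le_univ (S₀:Finset (Fin n))
      rw [S₀.2] at h1; exact h1
    have hd : ((k+1:ℕ):ℝ) * ((n:ℝ) - (k+1:ℕ)) = ((k:ℝ)+1) * ((n:ℝ) - (k+1)) := by push_cast; ring
    have hnk : (k:ℝ) + 1 ≤ (n:ℝ) := by exact_mod_cast hkn
    by_cases hμ : μ + ((k:ℝ)+1) = 0
    · have hμval : μ = -((k:ℝ)+1) := by linarith
      constructor
      · intro hcon
        exfalso
        rw [hd] at hcon
        nlinarith
      · intro _
        rw [hd]
        nlinarith
    · set y := dnF n k x with hy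
      have hup : ∀ S, upF n k y S = (μ + ((k:ℝ)+1)) * x S := by
        intro S
        have h1 := L1 x S
        rw [hAx] at h1
        simp only [Pi.smul_apply, smul_eq_mul] at h1
        rw [h1]; ring
      have hy0 : y ≠ 0 := by
        intro h0
        apply hS₀
        have h1 := hup S₀
        rw [h0] at h1
        have h2 : upF n k (0 : JV n k → ℝ) S₀ = 0 := by
          unfold upF
          refine Finset.sum_eq_zero fun T _ => ?_
          by_cases h : (T:Finset (Fin n)) ⊆ (S₀:Finset (Fin n)) <;> simp [h]
        rw [h2] at h1
        rcases mul_eq_zero.mp h1.symm with h | h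
        · exact absurd h hμ
        · exact h
      have hAy : (johnsonGraph n k).adjMatrix ℝ *ᵥ y = (μ + ((k:ℝ)+1) - ((n:ℝ) - k)) • y := by
        funext T
        have h1 := L2 y T
        have h2 : dnF n k (upF n k y) T = (μ + ((k:ℝ)+1)) * y T := by
          have hupf : upF n k y = fun S => (μ + ((k:ℝ)+1)) * x S := funext hup
          rw [hupf]
          have : dnF n k (fun S => (μ + ((k:ℝ)+1)) * x S) T = (μ + ((k:ℝ)+1)) * dnF n k x T := by
            unfold dnF
            rw [Finset.mul_sum]
            refine Finset.sum_congr rfl fun S _ => ?_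
            by_cases h : (T:Finset (Fin n)) ⊆ (S:Finset (Fin n)) <;> simp [h]
          rw [this, hy]
        rw [h2] at h1
        simp only [Pi.smul_apply, smul_eq_mul]
        linarith
      obtain ⟨ihc, ihb⟩ := ih (μ + ((k:ℝ)+1) - ((n:ℝ) - k)) y hy0 hAy
      constructor
      · intro hdval
        rw [hd] at hdval
        have hν : μ + ((k:ℝ)+1) - ((n:ℝ) - k) = (k:ℝ) * ((n:ℝ) - k) := by
          rw [hdval]; ring
        obtain ⟨c, hc⟩ := ihc hν
        have hupc : ∀ S : JV n (k+1), upF n k y S = ((k:ℝ)+1) * c := by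
          intro S
          rw [hc]
          exact upF_const c S
        refine ⟨((k:ℝ)+1) * c / (μ + ((k:ℝ)+1)), funext fun S => ?_⟩
        have h1 := hup S
        rw [hupc S] at h1
        field_simp
        linarith
      · intro hdval
        rw [hd] at hdval
        have hν : μ + ((k:ℝ)+1) - ((n:ℝ) - k) ≠ (k:ℝ) * ((n:ℝ) - k) := by
          intro h
          apply hdval
          linarith [h]
        have := ihb hν
        rw [hd]
        nlinarith

lemma eval_charpoly' {V : Type*} [Fintype V] [DecidableEq V] (A : Matrix V V ℝ) (t : ℝ) :
    A.charpoly.eval t = (t • (1 : Matrix V V ℝ) - A).det := by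
  rw [Matrix.charpoly, ← coe_evalRingHom, RingHom.map_det]
  congr 1
  ext i j
  by_cases h : i = j <;>
  simp [Matrix.charmatrix_apply, Matrix.diagonal_apply, Matrix.one_apply, h]

lemma hermitian_charpoly {V : Type*} [Fintype V] [DecidableEq V] (A : Matrix V V ℝ)
    (hA : A.IsHermitian) :
    A.charpoly = ∏ i : V, (X - C (hA.eigenvalues i)) := by
  have hst := hA.spectral_theorem
  set U : Matrix V V ℝ := (Matrix.IsHermitian.eigenvectorUnitary hA : Matrix V V ℝ) with hU
  have hUU : U * star U = 1 :=
    Matrix.mem_unitaryGroup_iff.mp (Matrix.IsHermitian.eigenvectorUnitary hA).2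
  set D : Matrix V V ℝ := Matrix.diagonal (RCLike.ofReal ∘ hA.eigenvalues) with hD
  have key : Matrix.charmatrix A
      = (C.mapMatrix U) * Matrix.charmatrix D * (C.mapMatrix (star U)) := by
    rw [Matrix.charmatrix, Matrix.charmatrix, mul_sub, sub_mul]
    congr 1
    · rw [← Matrix.scalar_commute X (fun r => Commute.all X r) (C.mapMatrix U)]
      rw [mul_assoc, ← _root_.map_mul, hUU, _root_.map_one, mul_one]
    · rw [← _root_.map_mul, ← _root_.map_mul, hst, Unitary.conjStarAlgAut_apply]
  have hdet : Matrix.charpoly A = (Matrix.charmatrix D).det := by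
    rw [Matrix.charpoly, key, Matrix.det_mul_right_comm, ← _root_.map_mul, hUU, _root_.map_one, one_mul]
  rw [hdet]
  have : Matrix.charmatrix D = Matrix.diagonal (fun i => X - C (hA.eigenvalues i)) := by
    ext i j
    by_cases h : i = j <;> simp [Matrix.charmatrix_apply, Matrix.diagonal_apply, h, hD]
  rw [this, Matrix.det_diagonal]

lemma roots_prod_eig {ι : Type*} [Fintype ι] (f : ι → ℝ) :
    (∏ i : ι, (X - C (f i))).roots = Finset.univ.val.map f := by
  have h1 : ∏ i : ι, (X - C (f i))
      = (Multiset.map (fun a : ℝ => X - C a) (Finset.univ.val.map f)).prod := by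
    rw [Multiset.map_map]
    rfl
  rw [h1, Polynomial.roots_multiset_prod_X_sub_C]

/-- For `1 ≤ r ≤ n - 1`, if `eig : Fin (binom n r) → ℝ` enumerates the eigenvalues of the
adjacency matrix `A` of `J(n,r)` with multiplicity in decreasing order (i.e. it is antitone and
the characteristic polynomial of `A` is `∏ i, (X - eig i)`), then the second largest eigenvalue
`eig 1` equals `r(n-r) - n`; consequently, for the transition matrix `M = A / (r(n-r))` of the
simple random walk, the difference between the top eigenvalue `1` and the second largest
eigenvalue `eig 1 / (r(n-r))` equals `n / (r(n-r))`. -/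
theorem stmt1 (n r : ℕ) (h1 : 1 ≤ r) (h2 : r ≤ n - 1)
    (eig : Fin (n.choose r) → ℝ) (hmono : Antitone eig)
    (hchar : ((johnsonGraph n r).adjMatrix ℝ).charpoly
      = ∏ i : Fin (n.choose r), (X - C (eig i))) :
    ∀ i : Fin (n.choose r), (i : ℕ) = 1 →
      eig i = (r : ℝ) * ((n : ℝ) - r) - n ∧
      1 - eig i / ((r : ℝ) * ((n : ℝ) - r)) = (n : ℝ) / ((r : ℝ) * ((n : ℝ) - r)) := by
  intro i hi
  obtain ⟨k, rfl⟩ : ∃ k, r = k + 1 := ⟨r - 1, by omega⟩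
  have hn2 : k + 2 ≤ n := by omega
  have hkn : k + 1 ≤ n := by omega
  set A := (johnsonGraph n (k+1)).adjMatrix ℝ with hAdef
  have hA : A.IsHermitian := by
    ext x y
    simp [hAdef, Matrix.conjTranspose_apply, SimpleGraph.adjMatrix_apply, SimpleGraph.adj_comm]
  set ev := hA.eigenvalues with hev
  set d : ℝ := ((k:ℝ)+1) * ((n:ℝ) - (k+1)) with hddef
  set lam : ℝ := d - n with hlamdef
  -- nonemptiness
  obtain ⟨s0, hs0sub, hs0⟩ := Finset.exists_subset_card_eq
    (show k + 1 ≤ (Finset.univ : Finset (Fin n)).card by simp [hkn])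
  have hNE : Nonempty (JV n (k+1)) := ⟨⟨s0, hs0⟩⟩
  have hNpos : 0 < n.choose (k+1) := Nat.choose_pos hkn
  haveI : NeZero (n.choose (k+1)) := ⟨hNpos.ne'⟩
  -- multiset of roots
  have hroots1 : A.charpoly.roots = Finset.univ.val.map eig := by
    rw [hchar, roots_prod_eig]
  have hroots2 : A.charpoly.roots = Finset.univ.val.map ev := by
    rw [hermitian_charpoly A hA, roots_prod_eig]
  have hMM : Finset.univ.val.map eig = Finset.univ.val.map ev := hroots1 ▸ hroots2
  -- facts about the hermitian eigenvalues
  have hevfact : ∀ w : JV n (k+1),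
      ((ev w = d → ∃ c : ℝ, ⇑(hA.eigenvectorBasis w) = fun _ => c) ∧
       (ev w ≠ d → ev w ≤ lam)) := by
    intro w
    have hvec : A *ᵥ ⇑(hA.eigenvectorBasis w) = ev w • ⇑(hA.eigenvectorBasis w) :=
      hA.mulVec_eigenvectorBasis w
    have hnz : (⇑(hA.eigenvectorBasis w) : JV n (k+1) → ℝ) ≠ 0 := by
      intro h0
      have := hA.eigenvectorBasis.toBasis.ne_zero w
      apply this
      rw [OrthonormalBasis.coe_toBasis]
      ext v
      exact congrFun h0 v
    have hb := johnson_bound n (k+1) (ev w) ⇑(hA.eigenvectorBasis w) hnz hvec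
    have hcast : ((k+1:ℕ):ℝ) * ((n:ℝ) - ((k+1:ℕ):ℝ)) = d := by push_cast [hddef]; ring
    rw [hcast] at hb
    refine ⟨hb.1, fun hne => ?_⟩
    have := hb.2 hne
    rw [hlamdef]; linarith
  -- all eig values bounded by d, and by lam when ≠ d
  have hmem : ∀ j : Fin (n.choose (k+1)), ∃ w, ev w = eig j := by
    intro j
    have : eig j ∈ Finset.univ.val.map ev := by
      rw [← hMM]
      exact Multiset.mem_map.mpr ⟨j, by simp⟩
    obtain ⟨w, _, hw⟩ := Multiset.mem_map.mp this
    exact ⟨w, hw⟩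
  have hlamd : lam < d := by
    rw [hlamdef]
    have : (0:ℝ) < n := by exact_mod_cast (show 0 < n by omega)
    linarith
  have hboundall : ∀ j, eig j ≤ d := by
    intro j
    obtain ⟨w, hw⟩ := hmem j
    by_cases h : ev w = d
    · rw [← hw, h]
    · have := (hevfact w).2 h
      rw [← hw]; linarith
  -- d is attained by eig
  have hd_root : ∃ i0, eig i0 = d := by
    have hone : (fun _ : JV n (k+1) => (1:ℝ)) ≠ 0 := by
      intro h0
      have := congrFun h0 (Classical.choice hNE)
      simpa using this
    have hdet : (d • (1 : Matrix (JV n (k+1)) (JV n (k+1)) ℝ) - A).det = 0 := by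
      apply Matrix.exists_mulVec_eq_zero_iff.mp
      refine ⟨(fun _ => 1), hone, ?_⟩
      rw [Matrix.sub_mulVec, Matrix.smul_mulVec, Matrix.one_mulVec, hAdef,
        johnson_regular hkn]
      simp [hddef]
    have heval : A.charpoly.eval d = 0 := by rw [eval_charpoly']; exact hdet
    rw [hchar, Polynomial.eval_prod] at heval
    obtain ⟨i0, _, h0⟩ := Finset.prod_eq_zero_iff.mp heval
    simp only [Polynomial.eval_sub, Polynomial.eval_X, Polynomial.eval_C] at h0
    exact ⟨i0, by linarith⟩
  -- lam is attained by eig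
  have hlam_root : ∃ j, eig j = lam := by
    set a : Fin n := ⟨0, by omega⟩ with hadef
    set b : Fin n := ⟨1, by omega⟩ with hbdef
    have hab : a ≠ b := by
      intro h
      have := congrArg Fin.val h
      simp [hadef, hbdef] at this
    have hcard2 : ((Finset.univ : Finset (Fin n)) \ {a, b}).card = n - 2 := by
      rw [Finset.card_sdiff_of_subset (Finset.subset_univ _)]
      rw [Finset.card_insert_of_notMem (by simp [hab]), Finset.card_singleton]
      simp
    obtain ⟨t, htsub, htcard⟩ := Finset.exists_subset_card_eq
      (show k ≤ ((Finset.univ : Finset (Fin n)) \ {a, b}).card by omega)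
    have hat : a ∉ t := by
      intro h
      have := htsub h
      simp [Finset.mem_sdiff] at this
    have hbt : b ∉ t := by
      intro h
      have := htsub h
      simp [Finset.mem_sdiff] at this
    have hScard : (insert a t).card = k + 1 := by
      rw [Finset.card_insert_of_notMem hat, htcard]
    set S₁ : JV n (k+1) := ⟨insert a t, hScard⟩ with hS₁
    set v : JV n (k+1) → ℝ := fun S => eV n (k+1) a S - eV n (k+1) b S with hvdef
    have hvne : v ≠ 0 := by
      intro h0
      have := congrFun h0 S₁
      have hav : a ∈ (S₁ : Finset (Fin n)) := by simp [hS₁]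
      have hbv : b ∉ (S₁ : Finset (Fin n)) := by
        simp only [hS₁, Finset.mem_insert]
        push_neg
        exact ⟨fun h => hab h.symm, hbt⟩
      simp [hvdef, eV, hav, hbv] at this
    have hdet : (lam • (1 : Matrix (JV n (k+1)) (JV n (k+1)) ℝ) - A).det = 0 := by
      apply Matrix.exists_mulVec_eq_zero_iff.mp
      refine ⟨v, hvne, ?_⟩
      rw [Matrix.sub_mulVec, Matrix.smul_mulVec, Matrix.one_mulVec, hAdef]
      rw [hvdef, johnson_second hkn a b]
      simp [hlamdef, hddef]
    have heval : A.charpoly.eval lam = 0 := by rw [eval_charpoly']; exact hdet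
    rw [hchar, Polynomial.eval_prod] at heval
    obtain ⟨j, _, h0⟩ := Finset.prod_eq_zero_iff.mp heval
    simp only [Polynomial.eval_sub, Polynomial.eval_X, Polynomial.eval_C] at h0
    exact ⟨j, by linarith⟩
  -- the top index
  set z : Fin (n.choose (k+1)) := ⟨0, hNpos⟩ with hzdef
  obtain ⟨i0, hi0⟩ := hd_root
  have heigz : eig z = d := by
    have hle : eig z ≤ d := hboundall z
    have hge : d ≤ eig z := by
      rw [← hi0]
      exact hmono (by simp [hzdef, Fin.le_def])
    linarith
  -- at most one hermitian eigenvalue equals d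
  have hcount_ev : (Finset.univ.filter fun w : JV n (k+1) => d = ev w).card ≤ 1 := by
    apply Finset.card_le_one.mpr
    intro w hw w' hw'
    simp only [Finset.mem_filter, Finset.mem_univ, true_and] at hw hw'
    by_contra hne
    obtain ⟨c, hc⟩ := (hevfact w).1 hw.symm
    obtain ⟨c', hc'⟩ := (hevfact w').1 hw'.symm
    have hcz : c ≠ 0 := by
      intro h0
      apply hA.eigenvectorBasis.toBasis.ne_zero w
      rw [OrthonormalBasis.coe_toBasis]
      ext u
      rw [show ((hA.eigenvectorBasis w : EuclideanSpace ℝ (JV n (k+1))) u) = c from congrFun hc u, h0]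
      rfl
    have hcz' : c' ≠ 0 := by
      intro h0
      apply hA.eigenvectorBasis.toBasis.ne_zero w'
      rw [OrthonormalBasis.coe_toBasis]
      ext u
      rw [show ((hA.eigenvectorBasis w' : EuclideanSpace ℝ (JV n (k+1))) u) = c' from congrFun hc' u, h0]
      rfl
    have horth : (inner (𝕜 := ℝ) (hA.eigenvectorBasis w) (hA.eigenvectorBasis w') : ℝ) = 0 :=
      hA.eigenvectorBasis.orthonormal.2 hne
    rw [PiLp.inner_apply] at horth
    simp only [RCLike.inner_apply, starRingEnd_apply, star_trivial] at horth
    have hsum : ∑ u : JV n (k+1), (hA.eigenvectorBasis w) u * (hA.eigenvectorBasis w') u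
        = (Fintype.card (JV n (k+1)) : ℝ) * (c * c') := by
      have hf1 : ∀ u, (hA.eigenvectorBasis w) u = c := fun u => congrFun hc u
      have hf2 : ∀ u, (hA.eigenvectorBasis w') u = c' := fun u => congrFun hc' u
      rw [Finset.sum_congr rfl (fun u _ => by rw [hf1 u, hf2 u])]
      simp [Finset.card_univ, mul_comm]
    simp only [mul_comm ((hA.eigenvectorBasis w') _)] at horth
    rw [hsum] at horth
    have hcardpos : (0:ℝ) < (Fintype.card (JV n (k+1)) : ℝ) := by
      have : 0 < Fintype.card (JV n (k+1)) := Fintype.card_pos_iff.mpr hNE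
      exact_mod_cast this
    rcases mul_eq_zero.mp horth with h | h
    · linarith
    · exact (mul_ne_zero hcz hcz') h
  -- transfer the count bound to eig
  have heig_ne_d : eig i ≠ d := by
    intro heq
    have h2 : 1 < (Finset.univ.filter fun j : Fin (n.choose (k+1)) => d = eig j).card := by
      apply Finset.one_lt_card.mpr
      refine ⟨z, ?_, i, ?_, ?_⟩
      · simp [heigz.symm]
      · simp [heq.symm]
      · intro h
        have := congrArg Fin.val h
        rw [hi] at this
        simp [hzdef] at this
    have h3 : Multiset.count d (Multiset.map eig Finset.univ.val)
        = (Finset.univ.filter fun j : Fin (n.choose (k+1)) => d = eig j).card := by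
      rw [Multiset.count_map]
      rfl
    have h4 : Multiset.count d (Multiset.map ev Finset.univ.val)
        = (Finset.univ.filter fun w : JV n (k+1) => d = ev w).card := by
      rw [Multiset.count_map]
      rfl
    rw [hMM, h4] at h3
    omega
  -- eig i ≤ lam
  have hile : eig i ≤ lam := by
    obtain ⟨w, hw⟩ := hmem i
    have : ev w ≠ d := by rw [hw]; exact heig_ne_d
    have := (hevfact w).2 this
    linarith [hw ▸ this]
  -- eig i ≥ lam
  obtain ⟨j, hj⟩ := hlam_root
  have hjz : j ≠ z := by
    intro h
    rw [h, heigz] at hj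
    linarith
  have hij : i ≤ j := by
    rw [Fin.le_def, hi]
    have : (j : ℕ) ≠ 0 := by
      intro h0
      apply hjz
      apply Fin.ext
      simp [hzdef, h0]
    omega
  have hige : lam ≤ eig i := by
    rw [← hj]
    exact hmono hij
  have heiglam : eig i = lam := le_antisymm hile hige
  -- final arithmetic
  have hdpos : (0:ℝ) < d := by
    rw [hddef]
    have h1 : (0:ℝ) < (k:ℝ) + 1 := by positivity
    have h2 : (0:ℝ) < (n:ℝ) - ((k:ℝ)+1) := by
      have : ((k:ℝ)+1) + 1 ≤ (n:ℝ) := by exact_mod_cast hn2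
      linarith
    positivity
  have hcast2 : ((k+1:ℕ):ℝ) * ((n:ℝ) - ((k+1:ℕ):ℝ)) = d := by push_cast [hddef]; ring
  constructor
  · rw [heiglam, hlamdef, ← hcast2]
  · rw [heiglam, hlamdef, ← hcast2]
    rw [hcast2]
    field_simp
    ring
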